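/- arXiv:2011.03823 — 2 statements merged into one kernel-verified Lean document; each statement's English description precedes it below -/
import Mathlib

section
/- Let Γ be a finite connected quiver. There exists an arrow positive function on Γ if and only if Γ does not contain any non-symmetric cycle. -/
/- STATEMENT 3: A finite connected quiver admits an arrow positive function iff it
contains no non-symmetric cycle, i.e. iff every closed walk in the underlying
undirected graph traverses as many arrows forwards as backwards. -/

universe u v

/-- A quiver is connected if its underlying undirected graph is connected. -/
def QuiverConnected (V : Type u) [Quiver.{v + 1} V] : Prop :=
  ∀ a b : V, Nonempty (@Quiver.Path (Quiver.Symmetrify V) _ a b)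

/-- The number of arrows of a walk (a path in the symmetrification) traversed in the
forward direction. -/
def fwdCount {V : Type u} [Quiver.{v + 1} V] :
    ∀ {a b : Quiver.Symmetrify V}, Quiver.Path a b → ℕ
  | _, _, Quiver.Path.nil => 0
  | _, _, Quiver.Path.cons p e => fwdCount p + Sum.elim (fun _ => 1) (fun _ => 0) e

/-- The number of arrows of a walk traversed in the backward direction. -/
def bwdCount {V : Type u} [Quiver.{v + 1} V] :
    ∀ {a b : Quiver.Symmetrify V}, Quiver.Path a b → ℕ
  | _, _, Quiver.Path.nil => 0
  | _, _, Quiver.Path.cons p e => bwdCount p + Sum.elim (fun _ => 0) (fun _ => 1) e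



section Aux
open Quiver
variable {V : Type u} [Quiver.{v + 1} V]

theorem fwdCount_comp {a b c : Quiver.Symmetrify V} (p : Quiver.Path a b) (q : Quiver.Path b c) :
    fwdCount (p.comp q) = fwdCount p + fwdCount q := by
  induction q with
  | nil => simp [fwdCount]
  | cons q e ih => simp [fwdCount, Quiver.Path.comp_cons, ih]; omega

theorem bwdCount_comp {a b c : Quiver.Symmetrify V} (p : Quiver.Path a b) (q : Quiver.Path b c) :
    bwdCount (p.comp q) = bwdCount p + bwdCount q := by
  induction q with
  | nil => simp [bwdCount]
  | cons q e ih => simp [bwdCount, Quiver.Path.comp_cons, ih]; omega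

theorem fwdCount_reverse {a b : Quiver.Symmetrify V} (p : Quiver.Path a b) :
    fwdCount p.reverse = bwdCount p := by
  induction p with
  | nil => simp [fwdCount, bwdCount]
  | cons p e ih =>
    rw [Quiver.Path.reverse, fwdCount_comp, ih]
    change (_ ⟶ _) ⊕ (_ ⟶ _) at e
    cases e with
    | inl f =>
      show fwdCount (Quiver.Hom.toPath (V := Quiver.Symmetrify V) (Sum.inr f)) + _ = _
      simp [fwdCount, bwdCount, Quiver.Hom.toPath]
    | inr f =>
      show fwdCount (Quiver.Hom.toPath (V := Quiver.Symmetrify V) (Sum.inl f)) + _ = _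
      simp [fwdCount, bwdCount, Quiver.Hom.toPath]
      omega

theorem bwdCount_reverse {a b : Quiver.Symmetrify V} (p : Quiver.Path a b) :
    bwdCount p.reverse = fwdCount p := by
  induction p with
  | nil => simp [fwdCount, bwdCount]
  | cons p e ih =>
    rw [Quiver.Path.reverse, bwdCount_comp, ih]
    change (_ ⟶ _) ⊕ (_ ⟶ _) at e
    cases e with
    | inl f =>
      show bwdCount (Quiver.Hom.toPath (V := Quiver.Symmetrify V) (Sum.inr f)) + _ = _
      simp [fwdCount, bwdCount, Quiver.Hom.toPath]
      omega
    | inr f =>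
      show bwdCount (Quiver.Hom.toPath (V := Quiver.Symmetrify V) (Sum.inl f)) + _ = _
      simp [fwdCount, bwdCount, Quiver.Hom.toPath]

theorem F_path {F : V → ℕ} (hF : ∀ ⦃i j : V⦄, (i ⟶ j) → F j = F i + 1)
    {a b : Quiver.Symmetrify V} (p : Quiver.Path a b) :
    (F b : ℤ) + bwdCount p = F a + fwdCount p := by
  induction p with
  | nil => simp [fwdCount, bwdCount]
  | cons p e ih =>
    change (_ ⟶ _) ⊕ (_ ⟶ _) at e
    cases e with
    | inl f =>
      have hf := hF f
      simp only [fwdCount, bwdCount, Sum.elim_inl] at *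
      push_cast
      omega
    | inr f =>
      have hf := hF f
      simp only [fwdCount, bwdCount, Sum.elim_inr] at *
      push_cast
      omega

end Aux

/-- There exists an arrow positive function on a finite connected quiver iff every
cycle (closed walk in the underlying undirected graph) is symmetric, i.e. has equally
many forward and backward arrows. -/
theorem exists_arrowPositiveFunction_iff_cycles_symmetric (V : Type u)
    [Quiver.{v + 1} V] [Finite V] (hconn : QuiverConnected V) :
    (∃ F : V → ℕ, ∀ ⦃i j : V⦄, (i ⟶ j) → F j = F i + 1) ↔
      (∀ (a : Quiver.Symmetrify V) (p : Quiver.Path a a), fwdCount p = bwdCount p) := by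
  constructor
  · rintro ⟨F, hF⟩ a p
    have h := F_path hF p
    omega
  · intro h
    cases isEmpty_or_nonempty V with
    | inl hemp => exact ⟨fun _ => 0, fun i _ _ => (hemp.false i).elim⟩
    | inr hne =>
      obtain ⟨v₀⟩ := hne
      have : Nonempty V := ⟨v₀⟩
      have pth : ∀ a : V, @Quiver.Path (Quiver.Symmetrify V) _ v₀ a :=
        fun a => (hconn v₀ a).some
      set G : V → ℤ := fun a => (fwdCount (pth a) : ℤ) - bwdCount (pth a) with hG
      have hdiff : ∀ (a : V) (q : @Quiver.Path (Quiver.Symmetrify V) _ v₀ a),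
          G a = (fwdCount q : ℤ) - bwdCount q := by
        intro a q
        have hc := h v₀ ((pth a).comp q.reverse)
        rw [fwdCount_comp (pth a) q.reverse, bwdCount_comp (pth a) q.reverse, fwdCount_reverse q,
          bwdCount_reverse q] at hc
        simp only [hG]
        omega
      have hstep : ∀ ⦃i j : V⦄, (i ⟶ j) → G j = G i + 1 := by
        intro i j f
        have hq := hdiff j ((pth i).cons (Sum.inl f))
        have e1 : fwdCount ((pth i).cons (Sum.inl f)) = fwdCount (pth i) + 1 :=
          fwdCount.eq_2 _ _ _ (pth i) (Sum.inl f)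
        have e2 : bwdCount ((pth i).cons (Sum.inl f)) = bwdCount (pth i) :=
          bwdCount.eq_2 _ _ _ (pth i) (Sum.inl f)
        rw [e1, e2] at hq
        simp only [fwdCount, bwdCount, Sum.elim_inl, hG] at hq ⊢
        push_cast at hq
        omega
      obtain ⟨a₀, ha₀⟩ := Finite.exists_min G
      refine ⟨fun a => (G a - G a₀).toNat, fun i j f => ?_⟩
      have h1 := ha₀ i
      have h2 := ha₀ j
      have h3 := hstep f
      show (G j - G a₀).toNat = (G i - G a₀).toNat + 1
      omega
end

section
/- Let G be a free abelian group with basis B and φ : G → G the homomorphism induced by an involution σ : B → B with no fixed points (σ² = id, σ(b) ≠ b for all b ∈ B). Then the set of elements x ∈ G with φ(x) = x is exactly the subgroup generated by {b + σ(b) : b ∈ B}. -/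
/- STATEMENT 9: Let G be free abelian with basis B and φ induced by a fixed-point-free
involution σ of B. Then the fixed points of φ are exactly the subgroup generated by
the elements b + σ(b), b ∈ B. -/

universe u w

theorem fixedPoints_of_involution {B : Type u} {G : Type w} [AddCommGroup G] [Module ℤ G]
    (bb : Module.Basis B ℤ G) (σ : B → B)
    (hinv : ∀ b, σ (σ b) = b) (hfix : ∀ b, σ b ≠ b)
    (φ : G →+ G) (hφ : ∀ b : B, φ (bb b) = bb (σ b)) :
    {x : G | φ x = x} =
      (AddSubgroup.closure (Set.range fun b : B => bb b + bb (σ b)) : Set G) := by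
  classical
  have hσinj : Function.Injective σ := Function.LeftInverse.injective hinv
  let φ' : G →ₗ[ℤ] G :=
    { toFun := φ, map_add' := φ.map_add,
      map_smul' := fun c x =>
        (congrArg φ (Int.cast_smul_eq_zsmul ℤ c x)).trans
          ((map_zsmul φ c x).trans (Int.cast_smul_eq_zsmul ℤ c (φ x)).symm) }
  have hrepr : ∀ x : G, bb.repr (φ x) = Finsupp.mapDomain σ (bb.repr x) := by
    have h : (bb.repr.toLinearMap.comp φ') =
        (Finsupp.lmapDomain ℤ ℤ σ).comp bb.repr.toLinearMap := by
      apply bb.ext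
      intro b
      show bb.repr (φ (bb b)) = Finsupp.mapDomain σ (bb.repr (bb b))
      simp [hφ, Finsupp.mapDomain_single]
    intro x
    exact LinearMap.congr_fun h x
  have hcoef : ∀ x : G, φ x = x → ∀ b, bb.repr x (σ b) = bb.repr x b := by
    intro x hx b
    have h := hrepr x
    rw [hx] at h
    have h2 := congrFun (congrArg DFunLike.coe h.symm) (σ b)
    rw [Finsupp.mapDomain_apply hσinj] at h2
    exact h2.symm
  ext x
  constructor
  · intro hx
    suffices H : ∀ n (x : G), φ x = x → (bb.repr x).support.card ≤ n →
        x ∈ AddSubgroup.closure (Set.range fun b : B => bb b + bb (σ b)) from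
      H _ x hx le_rfl
    intro n
    induction n with
    | zero =>
      intro x hx hc
      have h0 : bb.repr x = 0 := by
        rw [← Finsupp.support_eq_empty, ← Finset.card_eq_zero]
        omega
      have hx0 : x = 0 := by
        have := congrArg bb.repr.symm h0
        simpa using this
      rw [hx0]
      exact zero_mem _
    | succ n ih =>
      intro x hx hc
      by_cases hs : bb.repr x = 0
      · have hx0 : x = 0 := by
          have := congrArg bb.repr.symm hs
          simpa using this
        rw [hx0]
        exact zero_mem _
      · obtain ⟨b, hb⟩ := Finsupp.support_nonempty_iff.mpr hs
        set c := bb.repr x b with hc'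
        set g := bb b + bb (σ b) with hg'
        have hgmem : g ∈ AddSubgroup.closure (Set.range fun b : B => bb b + bb (σ b)) :=
          AddSubgroup.subset_closure ⟨b, rfl⟩
        have hφg : φ g = g := by
          rw [hg', map_add, hφ, hφ, hinv, add_comm]
        have hsg : bb.repr.symm (Finsupp.single b c + Finsupp.single (σ b) c) = c • g := by
          apply bb.repr.injective
          rw [LinearEquiv.apply_symm_apply, map_zsmul bb.repr c g, hg', map_add,
            bb.repr_self, bb.repr_self]
          ext a
          simp [Finsupp.single_apply, mul_comm]
        set y := x - c • g with hy'
        have hy : φ y = y := by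
          rw [hy', map_sub, hx, map_zsmul, hφg]
        have hrepry : bb.repr y =
            bb.repr x - (Finsupp.single b c + Finsupp.single (σ b) c) := by
          rw [hy', ← hsg, map_sub, LinearEquiv.apply_symm_apply]
        have hsub : (bb.repr y).support ⊆ (bb.repr x).support.erase b := by
          intro a ha
          rw [Finsupp.mem_support_iff] at ha
          rw [Finset.mem_erase, Finsupp.mem_support_iff]
          have hval : bb.repr y a = bb.repr x a
              - ((Finsupp.single b c) a + (Finsupp.single (σ b) c) a) := by
            rw [hrepry]; simp
          by_cases hab : a = b
          · exfalso
            apply ha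
            rw [hval, hab]
            rw [Finsupp.single_eq_same, Finsupp.single_eq_of_ne (hfix b).symm]
            simp [hc']
          · by_cases haσ : a = σ b
            · exfalso
              apply ha
              rw [hval, haσ]
              rw [Finsupp.single_eq_same, Finsupp.single_eq_of_ne]
              · rw [hcoef x hx b, ← hc']; ring
              · intro h; exact hfix b h
            · constructor
              · exact hab
              · intro h0
                apply ha
                rw [hval, h0, Finsupp.single_eq_of_ne, Finsupp.single_eq_of_ne]
                · ring
                · intro h; exact haσ h
                · intro h; exact hab h
        have hcard : (bb.repr y).support.card ≤ n := by
          have h1 := Finset.card_le_card hsub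
          rw [Finset.card_erase_of_mem hb] at h1
          omega
        have hymem := ih y hy hcard
        have hxy : x = y + c • g := by rw [hy']; abel
        rw [hxy]
        exact add_mem hymem (AddSubgroup.zsmul_mem _ hgmem c)
  · intro hx
    have hle : AddSubgroup.closure (Set.range fun b : B => bb b + bb (σ b)) ≤
        AddMonoidHom.eqLocus φ (AddMonoidHom.id G) := by
      rw [AddSubgroup.closure_le]
      rintro _ ⟨b, rfl⟩
      show φ (bb b + bb (σ b)) = bb b + bb (σ b)
      rw [map_add, hφ, hφ, hinv, add_comm]
    exact hle hx
end
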